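/- For a prime q, the number of matrices σ ∈ GL₂(F_q) having 1 as an eigenvalue (equivalently, satisfying 1 − tr(σ) + det(σ) = 0 in F_q) equals q(q² − 2) = q³ − 2q. -/

import Mathlib

open Finset

private lemma card_mul_eq_aux (q : ℕ) [Fact q.Prime] (e : ZMod q) :
    (univ.filter (fun p : ZMod q × ZMod q => p.1 * p.2 = e)).card =
      if e = 0 then 2 * q - 1 else q - 1 := by
  have hq := (Fact.out : q.Prime).two_le
  split_ifs with he
  · subst he
    have hset : (univ.filter (fun p : ZMod q × ZMod q => p.1 * p.2 = 0)) =
        (({0} : Finset (ZMod q)) ×ˢ univ) ∪ (univ ×ˢ ({0} : Finset (ZMod q))) := by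
      ext p; simp [Finset.mem_product, mul_eq_zero, Prod.ext_iff]; tauto
    have hinter : ((({0} : Finset (ZMod q)) ×ˢ univ) ∩ (univ ×ˢ ({0} : Finset (ZMod q))))
        = ({0} : Finset (ZMod q)) ×ˢ ({0} : Finset (ZMod q)) := by
      ext p; simp [Finset.mem_product, Prod.ext_iff]; tauto
    have h2 := Finset.card_union_add_card_inter (({0} : Finset (ZMod q)) ×ˢ univ)
      (univ ×ˢ ({0} : Finset (ZMod q)))
    rw [hinter] at h2
    simp only [Finset.card_product, Finset.card_singleton, Finset.card_univ, ZMod.card,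
      one_mul, mul_one] at h2
    rw [hset]
    omega
  · rw [Finset.card_nbij' (fun p : ZMod q × ZMod q => p.1)
      (fun b : ZMod q => (b, b⁻¹ * e)) (t := univ.erase 0)
      (by intro p hp; simp only [Finset.mem_coe, mem_filter] at hp
          exact Finset.mem_erase.mpr ⟨left_ne_zero_of_mul (hp.2 ▸ he), Finset.mem_univ _⟩)
      (by intro b hb; simp only [Finset.mem_coe, Finset.mem_erase] at hb
          simp only [Finset.mem_coe, mem_filter, Finset.mem_univ, true_and]
          rw [← mul_assoc, mul_inv_cancel₀ hb.1, one_mul])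
      (by intro p hp; simp only [Finset.mem_coe, mem_filter] at hp
          have h1 : p.1 ≠ 0 := left_ne_zero_of_mul (hp.2 ▸ he)
          have : p.1⁻¹ * e = p.2 := by rw [← hp.2, ← mul_assoc, inv_mul_cancel₀ h1, one_mul]
          simp [this])
      (by intro b hb; rfl)]
    rw [Finset.card_erase_of_mem (Finset.mem_univ 0), Finset.card_univ, ZMod.card]

private lemma card_sum_ne_one_aux (q : ℕ) [Fact q.Prime] :
    (univ.filter (fun p : ZMod q × ZMod q => ¬ p.1 + p.2 = 1)).card = q * q - q := by
  have h1 : (univ.filter (fun p : ZMod q × ZMod q => p.1 + p.2 = 1)).card = q := by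
    rw [Finset.card_nbij' (fun p : ZMod q × ZMod q => p.1)
      (fun a : ZMod q => (a, 1 - a)) (t := univ)
      (by intro _ _; exact Finset.mem_univ _)
      (by intro a _; simp)
      (by intro p hp; simp only [Finset.mem_coe, mem_filter] at hp
          have : 1 - p.1 = p.2 := by rw [← hp.2]; ring
          simp [this])
      (by intro b hb; rfl)]
    simp [ZMod.card]
  have h2 := Finset.card_filter_add_card_filter_not
    (s := (univ : Finset (ZMod q × ZMod q))) (p := fun p => p.1 + p.2 = 1)
  simp only [Finset.card_univ, Fintype.card_prod, ZMod.card] at h2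
  omega

private lemma card_corner_aux (q : ℕ) [Fact q.Prime] :
    (univ.filter (fun p : ZMod q × ZMod q =>
      ¬ p.1 + p.2 = 1 ∧ (p.1 - 1) * (p.2 - 1) = 0)).card = 2 * q - 3 := by
  have hq := (Fact.out : q.Prime).two_le
  have hset : (univ.filter (fun p : ZMod q × ZMod q =>
      ¬ p.1 + p.2 = 1 ∧ (p.1 - 1) * (p.2 - 1) = 0)) =
      (({1} : Finset (ZMod q)) ×ˢ (univ.erase 0)) ∪ ((univ.erase 0) ×ˢ ({1} : Finset (ZMod q))) := by
    ext ⟨a, d⟩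
    simp only [mem_filter, Finset.mem_univ, true_and, Finset.mem_union, Finset.mem_product,
      Finset.mem_singleton, Finset.mem_erase, mul_eq_zero, sub_eq_zero]
    constructor
    · rintro ⟨hs, rfl | rfl⟩
      · exact Or.inl ⟨rfl, fun h => hs (by rw [h, add_zero]), trivial⟩
      · exact Or.inr ⟨⟨fun h => hs (by rw [h, zero_add]), trivial⟩, rfl⟩
    · rintro (⟨rfl, h2, -⟩ | ⟨⟨h2, -⟩, rfl⟩)
      · refine ⟨fun h => h2 ?_, Or.inl rfl⟩
        have := sub_eq_zero.mpr h; rw [show 1 + d - 1 = d by ring] at this; exact this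
      · refine ⟨fun h => h2 ?_, Or.inr rfl⟩
        have := sub_eq_zero.mpr h; rw [show a + 1 - 1 = a by ring] at this; exact this
  have hinter : ((({1} : Finset (ZMod q)) ×ˢ (univ.erase 0)) ∩ ((univ.erase 0) ×ˢ ({1} : Finset (ZMod q))))
      = ({1} : Finset (ZMod q)) ×ˢ ({1} : Finset (ZMod q)) := by
    ext p
    simp only [Finset.mem_inter, Finset.mem_product, Finset.mem_singleton, Finset.mem_erase,
      Finset.mem_univ, and_true]
    constructor
    · rintro ⟨⟨h1, -⟩, -, h2⟩; exact ⟨h1, h2⟩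
    · rintro ⟨h1, h2⟩; exact ⟨⟨h1, h2 ▸ one_ne_zero⟩, h1 ▸ one_ne_zero, h2⟩
  have h2 := Finset.card_union_add_card_inter
    (({1} : Finset (ZMod q)) ×ˢ (univ.erase 0)) ((univ.erase 0) ×ˢ ({1} : Finset (ZMod q)))
  rw [hinter] at h2
  have hce : (univ.erase (0 : ZMod q)).card = q - 1 := by
    rw [Finset.card_erase_of_mem (Finset.mem_univ 0), Finset.card_univ, ZMod.card]
  simp only [Finset.card_product, Finset.card_singleton, hce, one_mul, mul_one] at h2
  rw [hset]
  omega

private lemma card_quad_aux (q : ℕ) [Fact q.Prime] :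
    (univ.filter (fun x : (ZMod q × ZMod q) × (ZMod q × ZMod q) =>
        x.2.1 * x.2.2 = (x.1.1 - 1) * (x.1.2 - 1) ∧ ¬ x.1.1 + x.1.2 = 1)).card
      = q * (q ^ 2 - 2) := by
  have hq := (Fact.out : q.Prime).two_le
  rw [Finset.card_eq_sum_card_fiberwise (f := Prod.fst)
    (t := (univ : Finset (ZMod q × ZMod q))) (fun x _ => Finset.mem_univ _)]
  have hfib : ∀ p : ZMod q × ZMod q,
      ((univ.filter (fun x : (ZMod q × ZMod q) × (ZMod q × ZMod q) =>
          x.2.1 * x.2.2 = (x.1.1 - 1) * (x.1.2 - 1) ∧ ¬ x.1.1 + x.1.2 = 1)).filter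
        (fun x => x.1 = p)).card =
      (if ¬ p.1 + p.2 = 1 then q - 1 else 0) +
      (if ¬ p.1 + p.2 = 1 ∧ (p.1 - 1) * (p.2 - 1) = 0 then q else 0) := by
    intro p
    by_cases hs : p.1 + p.2 = 1
    · simp only [hs, not_true_eq_false, if_false, false_and, if_false, add_zero]
      rw [Finset.card_eq_zero, Finset.filter_eq_empty_iff]
      rintro x hx
      simp only [mem_filter, Finset.mem_univ, true_and] at hx
      rintro rfl
      exact hx.2 hs
    · have hcard : ((univ.filter (fun x : (ZMod q × ZMod q) × (ZMod q × ZMod q) =>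
          x.2.1 * x.2.2 = (x.1.1 - 1) * (x.1.2 - 1) ∧ ¬ x.1.1 + x.1.2 = 1)).filter
          (fun x => x.1 = p)).card =
          (univ.filter (fun bc : ZMod q × ZMod q =>
            bc.1 * bc.2 = (p.1 - 1) * (p.2 - 1))).card := by
        refine Finset.card_nbij' (fun x => x.2) (fun bc => (p, bc)) ?_ ?_ ?_ ?_
        · intro x hx
          simp only [Finset.mem_coe, mem_filter, Finset.mem_univ, true_and] at hx ⊢
          obtain ⟨⟨h1, -⟩, rfl⟩ := hx
          exact h1
        · intro bc hbc
          simp only [Finset.mem_coe, mem_filter, Finset.mem_univ, true_and] at hbc ⊢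
          exact ⟨⟨hbc, hs⟩, trivial⟩
        · intro x hx
          simp only [Finset.mem_coe, mem_filter, Finset.mem_univ, true_and] at hx
          rw [← hx.2]
        · intro bc hbc; rfl
      rw [hcard, card_mul_eq_aux]
      simp only [hs, not_false_eq_true, true_and, if_true]
      split_ifs with h
      · omega
      · omega
  rw [Finset.sum_congr rfl (fun p _ => hfib p), Finset.sum_add_distrib,
    ← Finset.sum_filter, ← Finset.sum_filter, Finset.sum_const, Finset.sum_const,
    card_sum_ne_one_aux, card_corner_aux, smul_eq_mul, smul_eq_mul]
  have h1 : q ≤ q * q := Nat.le_mul_of_pos_left q (by omega)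
  have h2 : 3 ≤ 2 * q := by omega
  have h3 : 1 ≤ q := by omega
  have h4 : 2 ≤ q ^ 2 := by nlinarith
  zify [h1, h2, h3, h4]
  ring

theorem stmt12 (q : ℕ) [Fact q.Prime] :
    (Finset.univ.filter
      (fun σ : GL (Fin 2) (ZMod q) =>
        Matrix.det ((σ : Matrix (Fin 2) (Fin 2) (ZMod q)) - 1) = 0)).card =
      q * (q ^ 2 - 2) := by
  rw [← card_quad_aux q]
  refine Finset.card_bij
    (fun σ _ => ((((σ : Matrix (Fin 2) (Fin 2) (ZMod q)) 0 0),
                  ((σ : Matrix (Fin 2) (Fin 2) (ZMod q)) 1 1)),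
                 (((σ : Matrix (Fin 2) (Fin 2) (ZMod q)) 0 1),
                  ((σ : Matrix (Fin 2) (Fin 2) (ZMod q)) 1 0)))) ?_ ?_ ?_
  · intro σ hσ
    simp only [mem_filter, Finset.mem_univ, true_and] at hσ ⊢
    set M : Matrix (Fin 2) (Fin 2) (ZMod q) := (σ : Matrix (Fin 2) (Fin 2) (ZMod q))
    have hdet : M.det ≠ 0 := by
      have : IsUnit M.det := (Matrix.isUnit_iff_isUnit_det M).mp ⟨σ, rfl⟩
      exact this.ne_zero
    have h1 : (M - 1).det = (M 0 0 - 1) * (M 1 1 - 1) - M 0 1 * M 1 0 := by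
      simp [Matrix.det_fin_two, Matrix.sub_apply, Matrix.one_apply]
    rw [h1] at hσ
    have hdet2 : M.det = M 0 0 * M 1 1 - M 0 1 * M 1 0 := Matrix.det_fin_two M
    constructor
    · linear_combination -hσ
    · intro hc
      apply hdet
      rw [hdet2]
      have : M 0 1 * M 1 0 = (M 0 0 - 1) * (M 1 1 - 1) := by linear_combination -hσ
      rw [this]
      linear_combination hc
  · intro σ hσ τ hτ h
    simp only [Prod.ext_iff] at h
    ext i j
    fin_cases i <;> fin_cases j <;> simp [h.1.1, h.1.2, h.2.1, h.2.2]
  · rintro ⟨⟨a, d⟩, b, c⟩ hx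
    simp only [mem_filter, Finset.mem_univ, true_and] at hx
    obtain ⟨hbc, hs⟩ := hx
    set M : Matrix (Fin 2) (Fin 2) (ZMod q) := !![a, b; c, d] with hM
    have hdet : M.det = a + d - 1 := by
      rw [hM, Matrix.det_fin_two_of]
      linear_combination -hbc
    have hdetne : IsUnit M.det := by
      rw [hdet, isUnit_iff_ne_zero]
      intro h; exact hs (sub_eq_zero.mp h)
    obtain ⟨u, hu⟩ := (Matrix.isUnit_iff_isUnit_det M).mpr hdetne
    refine ⟨u, Finset.mem_filter.mpr ⟨Finset.mem_univ _, ?_⟩, ?_⟩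
    · have h1 : (M - 1).det = (a - 1) * (d - 1) - b * c := by
        simp [hM, Matrix.det_fin_two, Matrix.sub_apply, Matrix.one_apply]
        try ring
      rw [hu, h1]
      linear_combination -hbc
    · simp only [hu, hM]
      simp
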